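/- Suppose lim_{n→∞} m(ω_{<n})/M(ω_{<n}) = 0 for all infinite binary strings ω, and suppose for an infinite sequence of indices n_i one has M(ω_{<n_i}¬ω_{n_i}) ≤ c · m(ω_{<n_i}¬ω_{n_i}) for a constant c independent of i. Then lim_{i→∞} M_norm(ω_{n_i}|ω_{<n_i}) = 1. -/

import Mathlib

open Filter ENNReal

/-- Finite binary strings. -/
abbrev BStr := List Bool

/-- A recursively enumerable set of program/output pairs. -/
def RECoded (L : Set (BStr × BStr)) : Prop :=
  ∃ f : ℕ → Option (BStr × BStr), Computable f ∧ L = {x | ∃ n, f n = some x}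

/-- A set of strings is prefix-free if no element is a proper prefix of another. -/
def PrefixFreeSet (S : Set BStr) : Prop :=
  ∀ p ∈ S, ∀ q ∈ S, p <+: q → p = q

/-- A prefix machine: r.e. set of pairs whose programs form a prefix-free set. -/
def PrefixMachine (L : Set (BStr × BStr)) : Prop :=
  RECoded L ∧ PrefixFreeSet {p | ∃ y, (p, y) ∈ L}

/-- A monotone machine. -/
def MonotoneMachine (L : Set (BStr × BStr)) : Prop :=
  RECoded L ∧ ∀ p y q x, (p, y) ∈ L → (q, x) ∈ L → y.length ≤ x.length → p <+: q → y <+: x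

/-- `y ∈ L(p)` for a monotone machine `L`. -/
def MonOut (L : Set (BStr × BStr)) (p y : BStr) : Prop :=
  (∃ x, (p, x) ∈ L ∧ y <+: x) ∧ ∀ q z, (q, z) ∈ L → q <+: p → q ≠ p → ¬ y <+: z

/-- `λ_L(y) = Σ_{p : (p,y) ∈ L} 2^{-ℓ(p)}` for a prefix machine. -/
noncomputable def lamP (L : Set (BStr × BStr)) (y : BStr) : ℝ≥0∞ :=
  ∑' p : {p : BStr // (p, y) ∈ L}, (2 : ℝ≥0∞)⁻¹ ^ (p : BStr).length

/-- `M_L(y) = Σ_{p : y ∈ L(p)} 2^{-ℓ(p)}` for a monotone machine. -/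
noncomputable def MM (L : Set (BStr × BStr)) (y : BStr) : ℝ≥0∞ :=
  ∑' p : {p : BStr // MonOut L p y}, (2 : ℝ≥0∞)⁻¹ ^ (p : BStr).length

/-- A universal prefix machine: `(p,y) ∈ L ↔ (i'p, y) ∈ U` for some prefix code `i'` of `L`. -/
def IsUniversalPrefix (U : Set (BStr × BStr)) : Prop :=
  PrefixMachine U ∧ ∀ L, PrefixMachine L → ∃ ip : BStr,
    ∀ p y, ((p, y) ∈ L ↔ (ip ++ p, y) ∈ U)

/-- A universal monotone machine. -/
def IsUniversalMonotone (U : Set (BStr × BStr)) : Prop :=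
  MonotoneMachine U ∧ ∀ L, MonotoneMachine L → ∃ ip : BStr,
    ∀ p y, ((p, y) ∈ L ↔ (ip ++ p, y) ∈ U)

/-- Prefix Kolmogorov complexity w.r.t. a (universal) prefix machine `U`. -/
noncomputable def Kc (U : Set (BStr × BStr)) (y : BStr) : ℕ :=
  sInf {n | ∃ p : BStr, (p, y) ∈ U ∧ p.length = n}

/-- Complexity of a natural number via its binary representation. -/
noncomputable def KNat (U : Set (BStr × BStr)) (n : ℕ) : ℕ := Kc U (Nat.bits n)

/-- The first `n` bits of an infinite binary string. -/
def pre (ω : ℕ → Bool) (n : ℕ) : BStr := (List.range n).map ω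

namespace MnormAux

lemma kraft {S : Set BStr} (hS : PrefixFreeSet S) :
    ∑' p : S, (2 : ℝ≥0∞)⁻¹ ^ (p : BStr).length ≤ 1 := by
  classical
  rw [ENNReal.tsum_eq_iSup_sum]
  refine iSup_le fun F => ?_
  set F' : Finset BStr := F.image Subtype.val with hF'
  have hsum : ∑ p ∈ F, (2 : ℝ≥0∞)⁻¹ ^ (p : BStr).length
      = ∑ q ∈ F', (2 : ℝ≥0∞)⁻¹ ^ q.length := by
    rw [hF', Finset.sum_image]
    intro a _ b _ h; exact Subtype.ext h
  rw [hsum]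
  set N := F'.sup List.length with hN
  have hlen : ∀ q ∈ F', q.length ≤ N := fun q hq => Finset.le_sup hq
  have hSub : ∀ q ∈ F', q ∈ S := by
    intro q hq
    rw [hF'] at hq
    obtain ⟨a, _, rfl⟩ := Finset.mem_image.1 hq
    exact a.2
  let ext : BStr → Finset BStr := fun p =>
    (Finset.univ : Finset (List.Vector Bool (N - p.length))).image fun t => p ++ t.toList
  have hext_card : ∀ p, (ext p).card = 2 ^ (N - p.length) := by
    intro p
    show (Finset.image (fun t : List.Vector Bool (N - p.length) => p ++ t.toList)
      Finset.univ).card = _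
    rw [Finset.card_image_of_injective _ (fun t s h =>
      List.Vector.toList_injective (List.append_cancel_left h)),
      Finset.card_univ, card_vector, Fintype.card_bool]
  have hext_mem : ∀ p l, l ∈ ext p → p <+: l ∧ l.length = p.length + (N - p.length) := by
    intro p l hl
    obtain ⟨t, _, rfl⟩ := Finset.mem_image.1 hl
    exact ⟨⟨t.toList, rfl⟩, by simp [t.toList_length]⟩
  have hdisj : ∀ p ∈ F', ∀ q ∈ F', p ≠ q → Disjoint (ext p) (ext q) := by
    intro p hp q hq hpq
    refine Finset.disjoint_left.2 fun l hlp hlq => hpq ?_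
    have h1 := (hext_mem p l hlp).1
    have h2 := (hext_mem q l hlq).1
    rcases List.prefix_or_prefix_of_prefix h1 h2 with h | h
    · exact hS p (hSub p hp) q (hSub q hq) h
    · exact (hS q (hSub q hq) p (hSub p hp) h).symm
  have hcard : ∑ q ∈ F', 2 ^ (N - q.length) ≤ 2 ^ N := by
    calc ∑ q ∈ F', 2 ^ (N - q.length) = ∑ q ∈ F', (ext q).card :=
          Finset.sum_congr rfl fun q _ => (hext_card q).symm
      _ = (F'.biUnion ext).card := (Finset.card_biUnion hdisj).symm
      _ ≤ ((Finset.univ : Finset (List.Vector Bool N)).image List.Vector.toList).card := by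
          apply Finset.card_le_card
          intro l hl
          obtain ⟨q, hq, hlq⟩ := Finset.mem_biUnion.1 hl
          obtain ⟨_, hlN⟩ := hext_mem q l hlq
          have : l.length = N := by
            have := hlen q hq; omega
          exact Finset.mem_image.2 ⟨⟨l, this⟩, Finset.mem_univ _, rfl⟩
      _ ≤ 2 ^ N := le_of_eq (by
          rw [Finset.card_image_of_injective _ List.Vector.toList_injective,
            Finset.card_univ, card_vector, Fintype.card_bool])
  have key : ∀ q ∈ F', (2 : ℝ≥0∞)⁻¹ ^ q.length
      = (2 : ℝ≥0∞) ^ (N - q.length) * (2 : ℝ≥0∞)⁻¹ ^ N := by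
    intro q hq
    have hNq : N - q.length + q.length = N := Nat.sub_add_cancel (hlen q hq)
    rw [show (2 : ℝ≥0∞)⁻¹ ^ N = (2 : ℝ≥0∞)⁻¹ ^ (N - q.length) * (2 : ℝ≥0∞)⁻¹ ^ q.length from
      by rw [← pow_add, hNq], ← mul_assoc, ← mul_pow,
      ENNReal.mul_inv_cancel two_ne_zero ENNReal.ofNat_ne_top, one_pow, one_mul]
  calc ∑ q ∈ F', (2 : ℝ≥0∞)⁻¹ ^ q.length
      = ∑ q ∈ F', (2 : ℝ≥0∞) ^ (N - q.length) * (2 : ℝ≥0∞)⁻¹ ^ N :=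
        Finset.sum_congr rfl key
    _ = (∑ q ∈ F', (2 : ℝ≥0∞) ^ (N - q.length)) * (2 : ℝ≥0∞)⁻¹ ^ N :=
        (Finset.sum_mul ..).symm
    _ ≤ (2 : ℝ≥0∞) ^ N * (2 : ℝ≥0∞)⁻¹ ^ N := by
        apply mul_le_mul_left
        have : ((∑ q ∈ F', 2 ^ (N - q.length) : ℕ) : ℝ≥0∞) ≤ ((2 ^ N : ℕ) : ℝ≥0∞) :=
          Nat.cast_le.2 hcard
        push_cast at this
        exact this
    _ = 1 := by
        rw [← mul_pow, ENNReal.mul_inv_cancel two_ne_zero ENNReal.ofNat_ne_top, one_pow]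

lemma monOut_prefixFree (L : Set (BStr × BStr)) (y : BStr) :
    PrefixFreeSet {p | MonOut L p y} := by
  intro p hp q hq hpq
  by_contra hne
  obtain ⟨⟨x, hx, hyx⟩, _⟩ := hp
  exact hq.2 p x hx hpq hne hyx

lemma MM_le_one (L : Set (BStr × BStr)) (y : BStr) : MM L y ≤ 1 :=
  kraft (monOut_prefixFree L y)

lemma lamP_le_one {UP : Set (BStr × BStr)} (h : PrefixMachine UP) (y : BStr) :
    lamP UP y ≤ 1 :=
  kraft (fun p hp q hq hpq => h.2 p ⟨y, hp⟩ q ⟨y, hq⟩ hpq)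



def flipHead : BStr → BStr
  | [] => []
  | b :: t => (!b) :: t

def flipLast (l : BStr) : BStr := (flipHead l.reverse).reverse

lemma primrec_flipHead : Primrec flipHead := by
  have hg : Primrec₂ fun (l : BStr) (b : Bool) => (!b) :: l.tail :=
    Primrec.to₂ (Primrec.list_cons.comp (Primrec.not.comp Primrec.snd)
      (Primrec.list_tail.comp Primrec.fst))
  have h := Primrec.option_casesOn Primrec.list_head? (Primrec.const ([] : BStr)) hg
  exact h.of_eq fun l => by cases l <;> rfl

lemma computable_flipLast : Computable flipLast :=
  (Primrec.list_reverse.comp (primrec_flipHead.comp Primrec.list_reverse)).to_comp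

lemma flipHead_flipHead (l : BStr) : flipHead (flipHead l) = l := by
  cases l <;> simp [flipHead]

lemma flipLast_flipLast (l : BStr) : flipLast (flipLast l) = l := by
  simp [flipLast, flipHead_flipHead]

lemma flipLast_concat (x : BStr) (b : Bool) : flipLast (x ++ [b]) = x ++ [!b] := by
  simp [flipLast, flipHead]

lemma lamP_flip {UP : Set (BStr × BStr)} (hUP : IsUniversalPrefix UP) :
    ∃ C : ℝ≥0∞, C < ⊤ ∧ ∀ (x : BStr) (b : Bool),
      lamP UP (x ++ [!b]) ≤ C * lamP UP (x ++ [b]) := by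
  classical
  set L : Set (BStr × BStr) := {q | (q.1, flipLast q.2) ∈ UP} with hLdef
  have hL : PrefixMachine L := by
    constructor
    · obtain ⟨f, hf, hfU⟩ := hUP.1.1
      refine ⟨fun m => (f m).map fun q => (q.1, flipLast q.2), ?_, ?_⟩
      · exact Computable.option_map hf
          (((Computable.fst.comp Computable.snd).pair
            (computable_flipLast.comp (Computable.snd.comp Computable.snd))).to₂)
      · ext q
        simp only [hLdef, Set.mem_setOf_eq, hfU, Option.map_eq_some_iff]
        constructor
        · rintro ⟨m, hm⟩
          exact ⟨m, (q.1, flipLast q.2), hm, by simp [flipLast_flipLast]⟩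
        · rintro ⟨m, r, hm, hr⟩
          refine ⟨m, ?_⟩
          rw [hm]
          congr 1
          have h1 : r.1 = q.1 := by rw [← hr]
          have h2 : flipLast r.2 = q.2 := by rw [← hr]
          ext <;> simp [h1, ← h2, flipLast_flipLast]
    · intro p hp q hq hpq
      obtain ⟨y, hy⟩ := hp
      obtain ⟨z, hz⟩ := hq
      exact hUP.1.2 p ⟨_, hy⟩ q ⟨_, hz⟩ hpq
  obtain ⟨ip, hip⟩ := hUP.2 L hL
  have claim : ∀ (x : BStr) (b : Bool),
      (2 : ℝ≥0∞)⁻¹ ^ ip.length * lamP UP (x ++ [b]) ≤ lamP UP (x ++ [!b]) := by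
    intro x b
    have hmem : ∀ p : BStr, (p, x ++ [b]) ∈ UP → (ip ++ p, x ++ [!b]) ∈ UP := by
      intro p hp
      refine (hip p (x ++ [!b])).1 ?_
      show (p, flipLast (x ++ [!b])) ∈ UP
      rwa [flipLast_concat, Bool.not_not]
    rw [lamP, lamP, ← ENNReal.tsum_mul_left]
    have := ENNReal.tsum_comp_le_tsum_of_injective
      (f := fun p : {p : BStr // (p, x ++ [b]) ∈ UP} =>
        (⟨ip ++ p.1, hmem p.1 p.2⟩ : {p : BStr // (p, x ++ [!b]) ∈ UP}))
      (fun p q h => by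
        apply Subtype.ext
        have : ip ++ (p : BStr) = ip ++ (q : BStr) := congrArg Subtype.val h
        exact List.append_cancel_left this)
      (fun p : {p : BStr // (p, x ++ [!b]) ∈ UP} => (2 : ℝ≥0∞)⁻¹ ^ (p : BStr).length)
    refine le_trans (le_of_eq ?_) this
    refine tsum_congr fun p => ?_
    simp [List.length_append, pow_add]
  refine ⟨2 ^ ip.length, ?_, ?_⟩
  · exact ENNReal.pow_lt_top (by simp)
  intro x b
  have h := claim x (!b)
  rw [Bool.not_not] at h
  calc lamP UP (x ++ [!b])
      = 2 ^ ip.length * ((2 : ℝ≥0∞)⁻¹ ^ ip.length * lamP UP (x ++ [!b])) := by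
        rw [← mul_assoc, ← mul_pow, ENNReal.mul_inv_cancel two_ne_zero ENNReal.ofNat_ne_top,
          one_pow, one_mul]
    _ ≤ 2 ^ ip.length * lamP UP (x ++ [b]) := mul_le_mul_right h _

lemma MM_pos {UM : Set (BStr × BStr)} (hUM : IsUniversalMonotone UM) (y : BStr) :
    0 < MM UM y := by
  have hL : MonotoneMachine {([], y)} := by
    constructor
    · refine ⟨fun _ => some ([], y), Computable.const _, ?_⟩
      ext q
      simp [eq_comm]
    · intro p y' q x hp hq _ _
      simp only [Set.mem_singleton_iff, Prod.mk.injEq] at hp hq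
      rw [hp.2, hq.2]
  obtain ⟨ip, hip⟩ := hUM.2 _ hL
  have hipy : (ip, y) ∈ UM := by
    have := (hip [] y).1 rfl
    simpa using this
  set T : Set BStr := {q | q <+: ip ∧ ∃ z, (q, z) ∈ UM ∧ y <+: z} with hT
  have hTip : ip ∈ T := ⟨List.prefix_refl _, y, hipy, List.prefix_refl _⟩
  have hne : (List.length '' T).Nonempty := ⟨ip.length, Set.mem_image_of_mem _ hTip⟩
  obtain ⟨q₀, hq₀T, hq₀l⟩ := Nat.sInf_mem hne
  have hmon : MonOut UM q₀ y := by
    obtain ⟨hq₀ip, z, hz, hyz⟩ := hq₀T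
    refine ⟨⟨z, hz, hyz⟩, ?_⟩
    intro q w hw hqp hneq hyw
    have hqT : q ∈ T := ⟨hqp.trans hq₀ip, w, hw, hyw⟩
    have h1 : q₀.length ≤ q.length := hq₀l ▸ Nat.sInf_le (Set.mem_image_of_mem _ hqT)
    exact hneq (hqp.eq_of_length (le_antisymm hqp.length_le h1))
  calc (0 : ℝ≥0∞) < (2 : ℝ≥0∞)⁻¹ ^ q₀.length := by
        apply ENNReal.pow_pos
        simp
    _ ≤ MM UM y := ENNReal.le_tsum (⟨q₀, hmon⟩ : {p : BStr // MonOut UM p y})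

lemma pre_succ (ω : ℕ → Bool) (k : ℕ) : pre ω (k + 1) = pre ω k ++ [ω k] := by
  simp [pre, List.range_succ]

end MnormAux


/-- if m/M → 0 along every sequence and M(ω_{<n_i}¬ω_{n_i}) ≤ c·m(ω_{<n_i}¬ω_{n_i}),
then M_norm(ω_{n_i}|ω_{<n_i}) → 1. -/
theorem Mnorm_converges_of_gap (UM UP : Set (BStr × BStr))
    (hUM : IsUniversalMonotone UM) (hUP : IsUniversalPrefix UP)
    (ω : ℕ → Bool) (n : ℕ → ℕ) (hn : StrictMono n)
    (hgap : ∀ ω' : ℕ → Bool,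
      Tendsto (fun k => lamP UP (pre ω' k) / MM UM (pre ω' k)) atTop (nhds 0))
    (hc : ∃ c : ℝ≥0∞, c < ⊤ ∧ ∀ i,
      MM UM (pre ω (n i) ++ [!(ω (n i))]) ≤ c * lamP UP (pre ω (n i) ++ [!(ω (n i))])) :
    Tendsto (fun i =>
      MM UM (pre ω (n i) ++ [ω (n i)]) /
        (MM UM (pre ω (n i) ++ [false]) + MM UM (pre ω (n i) ++ [true])))
      atTop (nhds 1) := by
  obtain ⟨c, hcT, hcb⟩ := hc
  obtain ⟨C, hCT, hflip⟩ := MnormAux.lamP_flip hUP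
  set a : ℕ → ℝ≥0∞ := fun i => MM UM (pre ω (n i) ++ [ω (n i)]) with ha
  set e : ℕ → ℝ≥0∞ := fun i => MM UM (pre ω (n i) ++ [!ω (n i)]) with he
  have ha_pos : ∀ i, 0 < a i := fun i => MnormAux.MM_pos hUM _
  have ha_ne_top : ∀ i, a i ≠ ⊤ :=
    fun i => ((MnormAux.MM_le_one UM _).trans_lt ENNReal.one_lt_top).ne
  have he_ne_top : ∀ i, e i ≠ ⊤ :=
    fun i => ((MnormAux.MM_le_one UM _).trans_lt ENNReal.one_lt_top).ne
  -- bound e by c*C*m(correct prefix)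
  have hbound : ∀ i, e i ≤ c * C * lamP UP (pre ω (n i + 1)) := by
    intro i
    rw [MnormAux.pre_succ]
    calc e i ≤ c * lamP UP (pre ω (n i) ++ [!ω (n i)]) := hcb i
      _ ≤ c * (C * lamP UP (pre ω (n i) ++ [ω (n i)])) :=
          mul_le_mul_right (hflip _ _) _
      _ = c * C * lamP UP (pre ω (n i) ++ [ω (n i)]) := (mul_assoc _ _ _).symm
  -- ratio along the subsequence tends to 0
  have hnn : Tendsto (fun i => n i + 1) atTop atTop :=
    (tendsto_add_atTop_nat 1).comp hn.tendsto_atTop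
  have hr : Tendsto (fun i => lamP UP (pre ω (n i + 1)) / MM UM (pre ω (n i + 1)))
      atTop (nhds 0) := (hgap ω).comp hnn
  have hKr : Tendsto (fun i => c * C * (lamP UP (pre ω (n i + 1)) / MM UM (pre ω (n i + 1))))
      atTop (nhds 0) := by
    have := ENNReal.Tendsto.const_mul (a := c * C) hr
      (Or.inr (ENNReal.mul_ne_top hcT.ne hCT.ne))
    simpa using this
  have hea : Tendsto (fun i => e i / a i) atTop (nhds 0) := by
    refine tendsto_of_tendsto_of_tendsto_of_le_of_le tendsto_const_nhds hKr
      (fun i => zero_le) (fun i => ?_)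
    have h1 : e i / a i ≤ (c * C * lamP UP (pre ω (n i + 1))) / a i :=
      ENNReal.div_le_div_right (hbound i) _
    have h2 : a i = MM UM (pre ω (n i + 1)) := by rw [MnormAux.pre_succ]
    rw [h2] at h1 ⊢
    exact h1.trans (le_of_eq (mul_div_assoc _ _ _))
  have ht : Tendsto (fun i => (a i + e i) / a i) atTop (nhds 1) := by
    have heq : ∀ i, (a i + e i) / a i = 1 + e i / a i := by
      intro i
      rw [ENNReal.add_div, ENNReal.div_self (ha_pos i).ne' (ha_ne_top i)]
    have := (tendsto_const_nhds (x := (1 : ℝ≥0∞)) (f := atTop)).add hea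
    rw [add_zero] at this
    exact this.congr fun i => (heq i).symm
  have hinv : Tendsto (fun i => ((a i + e i) / a i)⁻¹) atTop (nhds 1) := by
    have := ENNReal.tendsto_inv_iff.2 ht
    rwa [inv_one] at this
  refine hinv.congr fun i => ?_
  have hfin : a i + e i ≠ ⊤ := by
    simp [ENNReal.add_ne_top, ha_ne_top i, he_ne_top i]
  have key : ((a i + e i) / a i)⁻¹ = a i / (a i + e i) :=
    ENNReal.inv_div (Or.inl (ha_ne_top i)) (Or.inl (ha_pos i).ne')
  rw [key]
  congr 1
  cases hb : ω (n i) <;> simp [ha, he, hb, add_comm]
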